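/- arXiv:1001.3728 — 3 statements merged into one kernel-verified Lean document; each statement's English description precedes it below -/
import Mathlib

section
/- Let σ, c, π > 0 and T > 0. Define v(t,x) = Φ(−x/(σ√(T−t))) + Φ((x − cπ(T−t))/(σ√(T−t))) · exp(−(cπ/σ²)x + π²c²(T−t)/(2σ²)) for t < T, where Φ is the standard normal CDF. Then v satisfies the backward heat equation ∂_t v + (σ²/2) ∂_{xx} v = 0 on (0,T) × ℝ. -/
open Set Real MeasureTheory



noncomputable def stdNormalCDF (x : ℝ) : ℝ :=
  ∫ y in Set.Iic x, Real.exp (-y ^ 2 / 2) / Real.sqrt (2 * π)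

noncomputable def gaussPDF (y : ℝ) : ℝ := Real.exp (-y ^ 2 / 2) / Real.sqrt (2 * π)

lemma hasDerivAt_gaussPDF (y : ℝ) : HasDerivAt gaussPDF (-y * gaussPDF y) y := by
  have h1 : HasDerivAt (fun z : ℝ => -z ^ 2 / 2) (-y) y := by
    have := ((hasDerivAt_pow 2 y).neg).div_const 2
    simpa using this.congr_deriv (by ring)
  have h : HasDerivAt (fun z : ℝ => Real.exp (-z ^ 2 / 2)) (Real.exp (-y ^ 2 / 2) * (-y)) y :=
    h1.exp
  unfold gaussPDF
  exact (h.div_const (Real.sqrt (2 * π))).congr_deriv (by ring)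

lemma continuous_gaussPDF : Continuous gaussPDF := by
  unfold gaussPDF; fun_prop

lemma integrable_gaussPDF : Integrable gaussPDF := by
  have h := (integrable_exp_neg_mul_sq (by norm_num : (0:ℝ) < 1/2)).div_const (Real.sqrt (2 * π))
  have heq : (fun y : ℝ => Real.exp (-(1/2) * y ^ 2) / Real.sqrt (2 * π)) = gaussPDF := by
    funext y; unfold gaussPDF; ring_nf
  rwa [heq] at h

lemma hasDerivAt_stdNormalCDF (x : ℝ) : HasDerivAt stdNormalCDF (gaussPDF x) x := by
  have hcdf : ∀ u : ℝ, stdNormalCDF u = stdNormalCDF 0 + ∫ y in (0:ℝ)..u, gaussPDF y := by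
    intro u
    have := intervalIntegral.integral_Iic_sub_Iic (μ := volume) (f := gaussPDF)
      (integrable_gaussPDF.integrableOn) (integrable_gaussPDF.integrableOn) (a := 0) (b := u)
    unfold stdNormalCDF; unfold gaussPDF at this ⊢
    linarith [this]
  have h : HasDerivAt (fun u => ∫ y in (0:ℝ)..u, gaussPDF y) (gaussPDF x) x :=
    intervalIntegral.integral_hasDerivAt_right
      (integrable_gaussPDF.intervalIntegrable)
      (continuous_gaussPDF.stronglyMeasurable.stronglyMeasurableAtFilter)
      (continuous_gaussPDF.continuousAt)
  have h2 := h.const_add (stdNormalCDF 0)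
  have : (fun u => stdNormalCDF 0 + ∫ y in (0:ℝ)..u, gaussPDF y) = stdNormalCDF :=
    funext fun u => (hcdf u).symm
  rwa [this] at h2


set_option maxHeartbeats 2000000 in
/-- the explicit function
`v(t,x) = Φ(−x/(σ√(T−t))) + Φ((x − cπ(T−t))/(σ√(T−t))) · exp(−(cπ/σ²)x + π²c²(T−t)/(2σ²))`
satisfies the backward heat equation `∂_t v + (σ²/2) ∂_{xx} v = 0` on `(0,T) × ℝ`. -/
theorem explicit_v_solves_backward_heat
    (σ c pen T : ℝ) (hσ : 0 < σ) (hc : 0 < c) (hpen : 0 < pen) (hT : 0 < T)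
    (v : ℝ → ℝ → ℝ)
    (hv : ∀ t < T, ∀ x : ℝ,
      v t x = stdNormalCDF (-x / (σ * Real.sqrt (T - t)))
        + stdNormalCDF ((x - c * pen * (T - t)) / (σ * Real.sqrt (T - t)))
          * Real.exp (-(c * pen / σ ^ 2) * x + pen ^ 2 * c ^ 2 * (T - t) / (2 * σ ^ 2))) :
    ∀ t ∈ Ioo 0 T, ∀ x : ℝ,
      deriv (fun s => v s x) t + σ ^ 2 / 2 * iteratedDeriv 2 (fun y => v t y) x = 0 := by
  intro t ht x
  obtain ⟨ht0, htT⟩ := ht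
  have hτ : 0 < T - t := sub_pos.mpr htT
  have hq : 0 < Real.sqrt (T - t) := Real.sqrt_pos.mpr hτ
  have hσq : σ * Real.sqrt (T - t) ≠ 0 := by positivity
  -- inner derivatives in x
  have hin1 : ∀ y : ℝ, HasDerivAt (fun z : ℝ => -z / (σ * Real.sqrt (T - t))) (-1 / (σ * Real.sqrt (T - t))) y := by
    intro y
    exact (hasDerivAt_id y).neg.div_const (σ * Real.sqrt (T - t))
  have hin2 : ∀ y : ℝ, HasDerivAt (fun z : ℝ => (z - c * pen * (T - t)) / (σ * Real.sqrt (T - t))) (1 / (σ * Real.sqrt (T - t))) y := by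
    intro y
    have := ((hasDerivAt_id y).sub_const (c * pen * (T - t))).div_const (σ * Real.sqrt (T - t))
    exact this
  have hA : ∀ y : ℝ, HasDerivAt (fun z : ℝ => stdNormalCDF (-z / (σ * Real.sqrt (T - t))))
      (gaussPDF (-y / (σ * Real.sqrt (T - t))) * (-1 / (σ * Real.sqrt (T - t)))) y := fun y =>
    (hasDerivAt_stdNormalCDF _).comp y (hin1 y)
  have hB : ∀ y : ℝ, HasDerivAt (fun z : ℝ => stdNormalCDF ((z - c * pen * (T - t)) / (σ * Real.sqrt (T - t))))
      (gaussPDF ((y - c * pen * (T - t)) / (σ * Real.sqrt (T - t))) * (1 / (σ * Real.sqrt (T - t)))) y := fun y =>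
    (hasDerivAt_stdNormalCDF _).comp y (hin2 y)
  have hE : ∀ y : ℝ, HasDerivAt (fun z : ℝ => Real.exp (-(c * pen / σ ^ 2) * z + pen ^ 2 * c ^ 2 * (T - t) / (2 * σ ^ 2)))
      (Real.exp (-(c * pen / σ ^ 2) * y + pen ^ 2 * c ^ 2 * (T - t) / (2 * σ ^ 2)) * (-(c * pen / σ ^ 2))) y := by
    intro y
    have hin : HasDerivAt (fun z : ℝ => -(c * pen / σ ^ 2) * z + pen ^ 2 * c ^ 2 * (T - t) / (2 * σ ^ 2)) (-(c * pen / σ ^ 2)) y := by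
      have := ((hasDerivAt_id y).const_mul (-(c * pen / σ ^ 2))).add_const
        (pen ^ 2 * c ^ 2 * (T - t) / (2 * σ ^ 2))
      exact this.congr_deriv (mul_one _)
    exact hin.exp
  have hderivF : deriv (fun z : ℝ => stdNormalCDF (-z / (σ * Real.sqrt (T - t))) + stdNormalCDF ((z - c * pen * (T - t)) / (σ * Real.sqrt (T - t))) * Real.exp (-(c * pen / σ ^ 2) * z + pen ^ 2 * c ^ 2 * (T - t) / (2 * σ ^ 2))) = (fun y : ℝ => -(gaussPDF (-y / (σ * Real.sqrt (T - t))) / (σ * Real.sqrt (T - t))) + gaussPDF ((y - c * pen * (T - t)) / (σ * Real.sqrt (T - t))) / (σ * Real.sqrt (T - t)) * Real.exp (-(c * pen / σ ^ 2) * y + pen ^ 2 * c ^ 2 * (T - t) / (2 * σ ^ 2)) + stdNormalCDF ((y - c * pen * (T - t)) / (σ * Real.sqrt (T - t))) * Real.exp (-(c * pen / σ ^ 2) * y + pen ^ 2 * c ^ 2 * (T - t) / (2 * σ ^ 2)) * (-(c * pen) / σ ^ 2)) :=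
    funext fun y => (((hA y).add ((hB y).mul (hE y))).congr_deriv (by ring)).deriv
  have hF2 : HasDerivAt (fun y : ℝ => -(gaussPDF (-y / (σ * Real.sqrt (T - t))) / (σ * Real.sqrt (T - t))) + gaussPDF ((y - c * pen * (T - t)) / (σ * Real.sqrt (T - t))) / (σ * Real.sqrt (T - t)) * Real.exp (-(c * pen / σ ^ 2) * y + pen ^ 2 * c ^ 2 * (T - t) / (2 * σ ^ 2)) + stdNormalCDF ((y - c * pen * (T - t)) / (σ * Real.sqrt (T - t))) * Real.exp (-(c * pen / σ ^ 2) * y + pen ^ 2 * c ^ 2 * (T - t) / (2 * σ ^ 2)) * (-(c * pen) / σ ^ 2)) (-(((x - c * pen * (T - t)) / (σ * Real.sqrt (T - t))) * gaussPDF ((x - c * pen * (T - t)) / (σ * Real.sqrt (T - t))) * Real.exp (-(c * pen / σ ^ 2) * x + pen ^ 2 * c ^ 2 * (T - t) / (2 * σ ^ 2)) / (σ * Real.sqrt (T - t)) ^ 2) + 2 * (gaussPDF ((x - c * pen * (T - t)) / (σ * Real.sqrt (T - t))) * Real.exp (-(c * pen / σ ^ 2) * x + pen ^ 2 * c ^ 2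 * (T - t) / (2 * σ ^ 2)) * (-(c * pen / σ ^ 2)) / (σ * Real.sqrt (T - t))) + stdNormalCDF ((x - c * pen * (T - t)) / (σ * Real.sqrt (T - t))) * Real.exp (-(c * pen / σ ^ 2) * x + pen ^ 2 * c ^ 2 * (T - t) / (2 * σ ^ 2)) * (c * pen / σ ^ 2) ^ 2 + x * gaussPDF (-x / (σ * Real.sqrt (T - t))) / (σ * Real.sqrt (T - t)) ^ 3) x := by
    have h_a : HasDerivAt (fun y : ℝ => -(gaussPDF (-y / (σ * Real.sqrt (T - t))) / (σ * Real.sqrt (T - t))))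
        (-((-(-x / (σ * Real.sqrt (T - t))) * gaussPDF (-x / (σ * Real.sqrt (T - t)))) * (-1 / (σ * Real.sqrt (T - t))) / (σ * Real.sqrt (T - t)))) x :=
      (((hasDerivAt_gaussPDF (-x / (σ * Real.sqrt (T - t)))).comp x (hin1 x)).div_const (σ * Real.sqrt (T - t))).neg
    have h_b := (((hasDerivAt_gaussPDF ((x - c * pen * (T - t)) / (σ * Real.sqrt (T - t)))).comp x (hin2 x)).div_const (σ * Real.sqrt (T - t))).mul (hE x)
    have h_c := ((hB x).mul (hE x)).mul_const (-(c * pen) / σ ^ 2)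
    refine ((h_a.add h_b).add h_c).congr_deriv ?_
    simp only [Function.comp_apply]
    set A1 := gaussPDF (-x / (σ * Real.sqrt (T - t))) with hA1
    set A2 := gaussPDF ((x - c * pen * (T - t)) / (σ * Real.sqrt (T - t))) with hA2
    set A3 := stdNormalCDF ((x - c * pen * (T - t)) / (σ * Real.sqrt (T - t))) with hA3
    set A4 := Real.exp (-(c * pen / σ ^ 2) * x + pen ^ 2 * c ^ 2 * (T - t) / (2 * σ ^ 2)) with hA4
    set Q := Real.sqrt (T - t) with hQ
    have hQ2 : T - t = Q ^ 2 := by rw [hQ]; exact (Real.sq_sqrt hτ.le).symm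
    have h1 : σ ≠ 0 := ne_of_gt hσ
    have h2 : Q ≠ 0 := by rw [hQ]; exact ne_of_gt hq
    rw [hQ2]
    field_simp
    ring
  have hxeq : iteratedDeriv 2 (fun y => v t y) x = -(((x - c * pen * (T - t)) / (σ * Real.sqrt (T - t))) * gaussPDF ((x - c * pen * (T - t)) / (σ * Real.sqrt (T - t))) * Real.exp (-(c * pen / σ ^ 2) * x + pen ^ 2 * c ^ 2 * (T - t) / (2 * σ ^ 2)) / (σ * Real.sqrt (T - t)) ^ 2) + 2 * (gaussPDF ((x - c * pen * (T - t)) / (σ * Real.sqrt (T - t))) * Real.exp (-(c * pen / σ ^ 2) * x + pen ^ 2 * c ^ 2 * (T - t) / (2 * σ ^ 2)) * (-(c * pen / σ ^ 2)) / (σ * Real.sqrt (T - t))) + stdNormalCDF ((x - c * pen * (T - t)) / (σ * Real.sqrt (T - t))) * Real.exp (-(c * pen / σ ^ 2) * x + pen ^ 2 * c ^ 2 * (T - t) / (2 * σ ^ 2)) * (c * pen / σ ^ 2) ^ 2 + x * gaussPDF (-x / (σ * Real.sqrt (T - t))) / (σ * Real.sqrt (T - t)) ^ 3 := by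
    have h0 : (fun y => v t y) = (fun z : ℝ => stdNormalCDF (-z / (σ * Real.sqrt (T - t))) + stdNormalCDF ((z - c * pen * (T - t)) / (σ * Real.sqrt (T - t))) * Real.exp (-(c * pen / σ ^ 2) * z + pen ^ 2 * c ^ 2 * (T - t) / (2 * σ ^ 2))) := funext fun y => hv t htT y
    rw [h0, show (2 : ℕ) = 1 + 1 from rfl, iteratedDeriv_succ, iteratedDeriv_one, hderivF]
    exact hF2.deriv
  -- derivatives in t
  have hden : HasDerivAt (fun u : ℝ => σ * Real.sqrt (T - u))
      (σ * (1 / (2 * Real.sqrt (T - t)) * -1)) t :=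
    ((Real.hasDerivAt_sqrt hτ.ne').comp t ((hasDerivAt_id t).const_sub T)).const_mul σ
  have hξ1t := (hasDerivAt_const t (-x)).div hden hσq
  have hΦ1t := (hasDerivAt_stdNormalCDF (-x / (σ * Real.sqrt (T - t)))).comp t hξ1t
  have hnum2 : HasDerivAt (fun u : ℝ => x - c * pen * (T - u)) (c * pen) t := by
    have := HasDerivAt.const_sub x (((hasDerivAt_id t).const_sub T).const_mul (c * pen))
    exact this.congr_deriv (by ring)
  have hξ2t := hnum2.div hden hσq
  have hΦ2t := (hasDerivAt_stdNormalCDF ((x - c * pen * (T - t)) / (σ * Real.sqrt (T - t)))).comp t hξ2t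
  have hEt : HasDerivAt (fun u : ℝ => Real.exp (-(c * pen / σ ^ 2) * x + pen ^ 2 * c ^ 2 * (T - u) / (2 * σ ^ 2)))
      (Real.exp (-(c * pen / σ ^ 2) * x + pen ^ 2 * c ^ 2 * (T - t) / (2 * σ ^ 2)) * (pen ^ 2 * c ^ 2 * -1 / (2 * σ ^ 2))) t := by
    have hin : HasDerivAt (fun u : ℝ => -(c * pen / σ ^ 2) * x + pen ^ 2 * c ^ 2 * (T - u) / (2 * σ ^ 2)) (pen ^ 2 * c ^ 2 * -1 / (2 * σ ^ 2)) t :=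
      HasDerivAt.const_add (-(c * pen / σ ^ 2) * x)
        ((((hasDerivAt_id t).const_sub T).const_mul (pen ^ 2 * c ^ 2)).div_const (2 * σ ^ 2))
    exact hin.exp
  have hG : HasDerivAt (fun u : ℝ => stdNormalCDF (-x / (σ * Real.sqrt (T - u))) + stdNormalCDF ((x - c * pen * (T - u)) / (σ * Real.sqrt (T - u))) * Real.exp (-(c * pen / σ ^ 2) * x + pen ^ 2 * c ^ 2 * (T - u) / (2 * σ ^ 2))) (gaussPDF (-x / (σ * Real.sqrt (T - t))) * (-x / (2 * σ * Real.sqrt (T - t) ^ 3)) + gaussPDF ((x - c * pen * (T - t)) / (σ * Real.sqrt (T - t))) * (c * pen / (σ * Real.sqrt (T - t)) + ((x - c * pen * (T - t)) / (σ * Real.sqrt (T - t))) / (2 * Real.sqrt (T - t) ^ 2)) * Real.exp (-(c * pen / σ ^ 2) * x + pen ^ 2 * c ^ 2 * (T - t) / (2 * σ ^ 2)) + stdNormalCDF ((x - c * pen * (T - t)) / (σ * Real.sqrt (T - t))) * Real.exp (-(c * pen / σ ^ 2) * x + pen ^ 2 * c ^ 2 * (T - t) / (2 * σ ^ 2)) *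 (-(pen ^ 2 * c ^ 2 / (2 * σ ^ 2)))) t :=
    by
    refine (hΦ1t.add (hΦ2t.mul hEt)).congr_deriv ?_
    simp only [Function.comp_apply, Pi.div_apply]
    set A1 := gaussPDF (-x / (σ * Real.sqrt (T - t))) with hA1
    set A2 := gaussPDF ((x - c * pen * (T - t)) / (σ * Real.sqrt (T - t))) with hA2
    set A3 := stdNormalCDF ((x - c * pen * (T - t)) / (σ * Real.sqrt (T - t))) with hA3
    set A4 := Real.exp (-(c * pen / σ ^ 2) * x + pen ^ 2 * c ^ 2 * (T - t) / (2 * σ ^ 2)) with hA4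
    set Q := Real.sqrt (T - t) with hQ
    have hQ2 : T - t = Q ^ 2 := by rw [hQ]; exact (Real.sq_sqrt hτ.le).symm
    have h1 : σ ≠ 0 := ne_of_gt hσ
    have h2 : Q ≠ 0 := by rw [hQ]; exact ne_of_gt hq
    rw [hQ2]
    field_simp
    ring
  have hteq : deriv (fun s => v s x) t = gaussPDF (-x / (σ * Real.sqrt (T - t))) * (-x / (2 * σ * Real.sqrt (T - t) ^ 3)) + gaussPDF ((x - c * pen * (T - t)) / (σ * Real.sqrt (T - t))) * (c * pen / (σ * Real.sqrt (T - t)) + ((x - c * pen * (T - t)) / (σ * Real.sqrt (T - t))) / (2 * Real.sqrt (T - t) ^ 2)) * Real.exp (-(c * pen / σ ^ 2) * x + pen ^ 2 * c ^ 2 * (T - t) / (2 * σ ^ 2)) + stdNormalCDF ((x - c * pen * (T - t)) / (σ * Real.sqrt (T - t))) * Real.exp (-(c * pen / σ ^ 2) * x + pen ^ 2 * c ^ 2 * (T - t) / (2 * σ ^ 2)) * (-(pen ^ 2 * c ^ 2 / (2 * σ ^ 2))) := by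
    have hev : (fun s => v s x) =ᶠ[nhds t] (fun u : ℝ => stdNormalCDF (-x / (σ * Real.sqrt (T - u))) + stdNormalCDF ((x - c * pen * (T - u)) / (σ * Real.sqrt (T - u))) * Real.exp (-(c * pen / σ ^ 2) * x + pen ^ 2 * c ^ 2 * (T - u) / (2 * σ ^ 2))) := by
      filter_upwards [Iio_mem_nhds htT] with s hs
      exact hv s hs x
    rw [hev.deriv_eq]
    exact hG.deriv
  rw [hteq, hxeq]
  set A1 := gaussPDF (-x / (σ * Real.sqrt (T - t))) with hA1
  set A2 := gaussPDF ((x - c * pen * (T - t)) / (σ * Real.sqrt (T - t))) with hA2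
  set A3 := stdNormalCDF ((x - c * pen * (T - t)) / (σ * Real.sqrt (T - t))) with hA3
  set A4 := Real.exp (-(c * pen / σ ^ 2) * x + pen ^ 2 * c ^ 2 * (T - t) / (2 * σ ^ 2)) with hA4
  set Q := Real.sqrt (T - t) with hQ
  have hQ2 : T - t = Q ^ 2 := by rw [hQ]; exact (Real.sq_sqrt hτ.le).symm
  have h1 : σ ≠ 0 := ne_of_gt hσ
  have h2 : Q ≠ 0 := by rw [hQ]; exact ne_of_gt hq
  rw [hQ2]
  field_simp
  ring
end

section
/- Let Δτ > 0, λ > 0, N ∈ ℕ, and for i = 0,…,N−1 let F_i, H_i ≥ 0 and set G_i = F_i + H_i + λ. Let ν_j ≥ 0 with Σ_j ν_j = 1 and let y_i = b_i + λΔτ·Σ_j ν_j c_{i,j} with all b_i ≥ 0 and c_{i,j} ≥ 0. Suppose the vector (β_0,…,β_{N−1}) with boundary values β_{−1}, β_N ≥ 0 satisfies, for each i, −F_i Δτ β_{i−1} + (1 + G_i Δτ) β_i − H_i Δτ β_{i+1} = y_i. Then β_i ≥ 0 for all i = 0,…,N−1. -/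
open Finset

/-- discrete maximum principle (lower bound) for the implicit
finite-difference scheme: if all coefficients and right-hand-side data are
non-negative, `G_i = F_i + H_i + λ`, and the boundary values are non-negative,
then the solution `β` of the implicit step is non-negative. -/
theorem discrete_maximum_principle_lower
    (N : ℕ) (Δτ lam : ℝ) (hΔτ : 0 < Δτ) (hlam : 0 < lam)
    (F G H b : ℤ → ℝ) (J : Finset ℤ) (ν : ℤ → ℝ) (c : ℤ → ℤ → ℝ) (y : ℤ → ℝ)
    (hF : ∀ i, 0 ≤ F i) (hH : ∀ i, 0 ≤ H i)
    (hG : ∀ i, G i = F i + H i + lam)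
    (hν : ∀ j ∈ J, 0 ≤ ν j) (hνsum : ∑ j ∈ J, ν j = 1)
    (hb : ∀ i, 0 ≤ b i) (hc : ∀ i j, 0 ≤ c i j)
    (hy : ∀ i, y i = b i + lam * Δτ * ∑ j ∈ J, ν j * c i j)
    (β : ℤ → ℝ)
    (hbdry_left : 0 ≤ β (-1)) (hbdry_right : 0 ≤ β N)
    (heq : ∀ i : ℤ, 0 ≤ i → i < N →
      -(F i) * Δτ * β (i - 1) + (1 + G i * Δτ) * β i - H i * Δτ * β (i + 1) = y i) :
    ∀ i : ℤ, 0 ≤ i → i < N → 0 ≤ β i := by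
  have hyn : ∀ i, 0 ≤ y i := by
    intro i
    rw [hy i]
    have : 0 ≤ ∑ j ∈ J, ν j * c i j :=
      Finset.sum_nonneg fun j hj => mul_nonneg (hν j hj) (hc i j)
    have := mul_nonneg (mul_nonneg hlam.le hΔτ.le) this
    linarith [hb i]
  have hNE : (Finset.Icc (-1 : ℤ) N).Nonempty := ⟨N, Finset.mem_Icc.mpr ⟨by omega, le_refl _⟩⟩
  obtain ⟨i₀, hi₀mem, hi₀min⟩ := Finset.exists_min_image _ β hNE
  have hmin0 : 0 ≤ β i₀ := by
    by_contra hneg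
    push_neg at hneg
    have h1 : i₀ ≠ -1 := fun h => absurd hbdry_left (by rw [← h]; linarith)
    have h2 : i₀ ≠ (N : ℤ) := fun h => absurd hbdry_right (by rw [← h]; linarith)
    simp only [Finset.mem_Icc] at hi₀mem
    have hlo : 0 ≤ i₀ := by omega
    have hhi : i₀ < (N : ℤ) := by omega
    have e := heq i₀ hlo hhi
    have hm1 : β i₀ ≤ β (i₀ - 1) := hi₀min _ (Finset.mem_Icc.mpr ⟨by omega, by omega⟩)
    have hp1 : β i₀ ≤ β (i₀ + 1) := hi₀min _ (Finset.mem_Icc.mpr ⟨by omega, by omega⟩)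
    rw [hG i₀] at e
    have hFm : F i₀ * Δτ * β (i₀ - 1) ≥ F i₀ * Δτ * β i₀ :=
      mul_le_mul_of_nonneg_left hm1 (mul_nonneg (hF i₀) hΔτ.le)
    have hHm : H i₀ * Δτ * β (i₀ + 1) ≥ H i₀ * Δτ * β i₀ :=
      mul_le_mul_of_nonneg_left hp1 (mul_nonneg (hH i₀) hΔτ.le)
    have hyi := hyn i₀
    have key : (1 + lam * Δτ) * β i₀ ≥ y i₀ := by nlinarith
    nlinarith [mul_pos hlam hΔτ]
  intro i hi0 hiN
  exact le_trans hmin0 (hi₀min i (Finset.mem_Icc.mpr ⟨by omega, by omega⟩))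
end

section
/- Let Δx > 0, λ > 0, and suppose σ*² := min_i,n σ²(τ_n, x_i) > 0 and Σ* := min_i,n Σ_i^n satisfy −Σ*·Δx ≤ σ*²/(2λ). Then for every i, n and every value β ≥ 0 of the reduction argument, the finite-difference coefficients F_i^n(β) = σ²(τ_{n+1},x_i)/(2Δx²) + r(β)/Δx + λΣ_i^{n+1}/Δx, H_i^n = σ²(τ_{n+1},x_i)/(2Δx²), and G_i^n(β) = F_i^n(β) + H_i^n + λ are all non-negative, where r : [0,∞) → [0,∞). -/
open Set

/-- under the CFL-type condition `−Sig*·Δx ≤ σ*²/(2λ)`, the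
finite-difference coefficients `F_i^n(β)`, `H_i^n` and `G_i^n(β) = F_i^n(β) + H_i^n + λ`
of the implicit scheme are all non-negative. -/
theorem scheme_coefficients_nonneg
    (Δx lam : ℝ) (hΔx : 0 < Δx) (hlam : 0 < lam)
    (σsq : ℕ → ℕ → ℝ) (Sig : ℕ → ℕ → ℝ) (σstarSq Sigstar : ℝ)
    (hσstar_pos : 0 < σstarSq)
    (hσstar : ∀ i n, σstarSq ≤ σsq n i)
    (hSigstar : ∀ i n, Sigstar ≤ Sig i n)
    (hCFL : -Sigstar * Δx ≤ σstarSq / (2 * lam))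
    (r : ℝ → ℝ) (hr : ∀ a ∈ Ici (0:ℝ), 0 ≤ r a) :
    ∀ i n : ℕ, ∀ β : ℝ, 0 ≤ β →
      0 ≤ σsq (n + 1) i / (2 * Δx ^ 2) + r β / Δx + lam * Sig i (n + 1) / Δx ∧
      0 ≤ σsq (n + 1) i / (2 * Δx ^ 2) ∧
      0 ≤ (σsq (n + 1) i / (2 * Δx ^ 2) + r β / Δx + lam * Sig i (n + 1) / Δx)
            + σsq (n + 1) i / (2 * Δx ^ 2) + lam := by
  intro i n β hβ
  have h1 := hσstar i (n + 1)
  have h2 := hSigstar i (n + 1)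
  have hrβ := hr β (mem_Ici.mpr hβ)
  have hx2 : (0:ℝ) < Δx ^ 2 := by positivity
  have hCFL' : -Sigstar * Δx * (2 * lam) ≤ σstarSq := by
    have h := mul_le_mul_of_nonneg_right hCFL (by positivity : (0:ℝ) ≤ 2 * lam)
    rwa [div_mul_cancel₀ _ (by positivity : (2:ℝ) * lam ≠ 0)] at h
  have hF : 0 ≤ σsq (n + 1) i / (2 * Δx ^ 2) + lam * Sig i (n + 1) / Δx := by
    rw [div_add_div _ _ (by positivity : (2:ℝ) * Δx ^ 2 ≠ 0) (ne_of_gt hΔx),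
      le_div_iff₀ (by positivity : (0:ℝ) < 2 * Δx ^ 2 * Δx)]
    nlinarith [mul_le_mul_of_nonneg_left h1 hΔx.le,
      mul_le_mul_of_nonneg_left h2 (by positivity : (0:ℝ) ≤ 2 * lam * Δx ^ 2),
      mul_le_mul_of_nonneg_right hCFL' hΔx.le]
  have hH : 0 ≤ σsq (n + 1) i / (2 * Δx ^ 2) := div_nonneg (hσstar_pos.le.trans h1) (by positivity)
  have hrd : 0 ≤ r β / Δx := div_nonneg hrβ hΔx.le
  refine ⟨by linarith, hH, by linarith⟩
end
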